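/- Let H be a real Hilbert space, Q a nonempty closed convex subset of H, and g : Q × Q → ℝ a monotone bifunction on Q. Fix α > 0 and u, v ∈ H, and suppose w_u, w_v ∈ Q satisfy g(w_u, y) + (1/α)⟨y − w_u, w_u − u⟩ ≥ 0 for all y ∈ Q and g(w_v, y) + (1/α)⟨y − w_v, w_v − v⟩ ≥ 0 for all y ∈ Q. Then ‖w_u − w_v‖² ≤ ⟨w_u − w_v, u − v⟩; that is, the resolvent T_α^g is firmly nonexpansive. -/

import Mathlib

/-- The resolvent of a monotone bifunction is firmly nonexpansive:
`‖w_u − w_v‖² ≤ ⟨w_u − w_v, u − v⟩`. -/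
theorem resolvent_firmly_nonexpansive
    {H : Type*} [NormedAddCommGroup H] [InnerProductSpace ℝ H] [CompleteSpace H]
    (Q : Set H) (hQne : Q.Nonempty) (hQcl : IsClosed Q) (hQcv : Convex ℝ Q)
    (g : H → H → ℝ)
    (hmono : ∀ u ∈ Q, ∀ v ∈ Q, g u v + g v u ≤ 0)
    (α : ℝ) (hα : 0 < α) (u v : H)
    (wu wv : H) (hwuQ : wu ∈ Q) (hwvQ : wv ∈ Q)
    (hwu : ∀ y ∈ Q, g wu y + (1 / α) * (inner ℝ (y - wu) (wu - u) : ℝ) ≥ 0)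
    (hwv : ∀ y ∈ Q, g wv y + (1 / α) * (inner ℝ (y - wv) (wv - v) : ℝ) ≥ 0) :
    ‖wu - wv‖ ^ 2 ≤ (inner ℝ (wu - wv) (u - v) : ℝ) := by
  have h1 := hwu wv hwvQ
  have h2 := hwv wu hwuQ
  have h3 := hmono wu hwuQ wv hwvQ
  have hsum : (1 / α) * ((inner ℝ (wv - wu) (wu - u) : ℝ)
      + (inner ℝ (wu - wv) (wv - v) : ℝ)) ≥ 0 := by nlinarith
  have h4 : (inner ℝ (wv - wu) (wu - u) : ℝ)
      + (inner ℝ (wu - wv) (wv - v) : ℝ) ≥ 0 := by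
    by_contra h
    push_neg at h
    nlinarith [mul_pos (one_div_pos.mpr hα) (neg_pos.mpr h)]
  have key : (inner ℝ (wu - wv) ((wv - v) - (wu - u)) : ℝ) ≥ 0 := by
    rw [inner_sub_right]
    have : (inner ℝ (wv - wu) (wu - u) : ℝ) = -(inner ℝ (wu - wv) (wu - u) : ℝ) := by
      rw [← inner_neg_left, neg_sub]
    linarith [this ▸ h4]
  have expand : (inner ℝ (wu - wv) ((wv - v) - (wu - u)) : ℝ)
      = (inner ℝ (wu - wv) (u - v) : ℝ) - (inner ℝ (wu - wv) (wu - wv) : ℝ) := by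
    rw [← inner_sub_right]; congr 1; abel
  have := real_inner_self_eq_norm_sq (wu - wv)
  linarith [expand ▸ key]
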